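/- Let M = K(a,b,c,d) be a 4×4 real K3 matrix whose four eigenvalues a+b+c+d, a+b−c−d, a−b+c−d, a−b−c+d are pairwise distinct, and suppose Q is a real 4×4 matrix with exp(Q) = M. Then Q has K3 form; moreover all four eigenvalues of M are strictly positive and Q = S · diag(log(a+b+c+d), log(a+b−c−d), log(a−b+c−d), log(a−b−c+d)) · S⁻¹, the principal logarithm of M. -/

import Mathlib

/-- The Kimura 3ST matrix `K(a,b,c,d)`. -/
def K {α : Type*} (a b c d : α) : Matrix (Fin 4) (Fin 4) α :=
  !![a, b, c, d;
     b, a, d, c;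
     c, d, a, b;
     d, c, b, a]

/-- The 4×4 Hadamard matrix `S` (over ℝ). -/
def S : Matrix (Fin 4) (Fin 4) ℝ :=
  !![1,  1,  1,  1;
     1,  1, -1, -1;
     1, -1,  1, -1;
     1, -1, -1,  1]

lemma S_mul_S : S * S = (4 : ℝ) • 1 := by
  ext i j
  fin_cases i <;> fin_cases j <;>
    simp [S, Matrix.mul_apply, Fin.sum_univ_four, Matrix.one_apply,
      Matrix.vecHead, Matrix.vecTail] <;> norm_num

lemma S_mul_smul_S : S * ((4 : ℝ)⁻¹ • S) = 1 := by
  rw [Matrix.mul_smul, S_mul_S, smul_smul]; norm_num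

lemma smul_S_mul_S : ((4 : ℝ)⁻¹ • S) * S = 1 := by
  rw [Matrix.smul_mul, S_mul_S, smul_smul]; norm_num

lemma isUnit_S : IsUnit S := ⟨⟨S, (4 : ℝ)⁻¹ • S, S_mul_smul_S, smul_S_mul_S⟩, rfl⟩

lemma S_inv : S⁻¹ = (4 : ℝ)⁻¹ • S := Matrix.inv_eq_right_inv S_mul_smul_S

lemma S_mul_S_inv : S * S⁻¹ = 1 := by rw [S_inv]; exact S_mul_smul_S

set_option maxHeartbeats 2000000 in
lemma conj_K (a b c d : ℝ) :
    S⁻¹ * K a b c d * S =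
      Matrix.diagonal ![a + b + c + d, a + b - c - d, a - b + c - d, a - b - c + d] := by
  rw [S_inv]
  ext i j
  fin_cases i <;> fin_cases j <;>
    simp [S, K, Matrix.mul_apply, Fin.sum_univ_four, Matrix.diagonal,
      Matrix.vecHead, Matrix.vecTail] <;> ring

set_option maxHeartbeats 2000000 in
lemma S_diag_S_inv (v : Fin 4 → ℝ) :
    S * Matrix.diagonal v * S⁻¹ =
      K ((v 0 + v 1 + v 2 + v 3) / 4) ((v 0 + v 1 - v 2 - v 3) / 4)
        ((v 0 - v 1 + v 2 - v 3) / 4) ((v 0 - v 1 - v 2 + v 3) / 4) := by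
  rw [S_inv]
  ext i j
  fin_cases i <;> fin_cases j <;>
    simp [S, K, Matrix.mul_apply, Fin.sum_univ_four, Matrix.diagonal,
      Matrix.vecHead, Matrix.vecTail, Fin.succ, show ((3:Fin 4) = 3) from rfl] <;>
    norm_num <;> ring

/-- If a real K3 matrix `M = K(a,b,c,d)` has pairwise distinct eigenvalues and a real
logarithm `Q`, then `Q` has K3 form, the eigenvalues of `M` are strictly positive, and
`Q` is the principal logarithm of `M`. -/
theorem stmt_8 (a b c d : ℝ)
    (h12 : a + b + c + d ≠ a + b - c - d) (h13 : a + b + c + d ≠ a - b + c - d)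
    (h14 : a + b + c + d ≠ a - b - c + d) (h23 : a + b - c - d ≠ a - b + c - d)
    (h24 : a + b - c - d ≠ a - b - c + d) (h34 : a - b + c - d ≠ a - b - c + d)
    (Q : Matrix (Fin 4) (Fin 4) ℝ)
    (hexp : NormedSpace.exp Q = K a b c d) :
    (∃ α β γ δ : ℝ, Q = K α β γ δ) ∧
    0 < a + b + c + d ∧ 0 < a + b - c - d ∧ 0 < a - b + c - d ∧ 0 < a - b - c + d ∧
    Q = S * Matrix.diagonal
        ![Real.log (a + b + c + d), Real.log (a + b - c - d),
          Real.log (a - b + c - d), Real.log (a - b - c + d)]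
      * S⁻¹ := by
  set lam : Fin 4 → ℝ := ![a + b + c + d, a + b - c - d, a - b + c - d, a - b - c + d] with hlam
  have hne : ∀ i j : Fin 4, i ≠ j → lam i ≠ lam j := by
    intro i j hij
    fin_cases i <;> fin_cases j <;>
      first
        | exact absurd rfl hij
        | simpa [hlam] using h12 | simpa [hlam] using h12.symm
        | simpa [hlam] using h13 | simpa [hlam] using h13.symm
        | simpa [hlam] using h14 | simpa [hlam] using h14.symm
        | simpa [hlam] using h23 | simpa [hlam] using h23.symm
        | simpa [hlam] using h24 | simpa [hlam] using h24.symm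
        | simpa [hlam] using h34 | simpa [hlam] using h34.symm
  set D : Matrix (Fin 4) (Fin 4) ℝ := S⁻¹ * Q * S with hD
  have hexpD : NormedSpace.exp D = Matrix.diagonal lam := by
    rw [hD, Matrix.exp_conj' S Q isUnit_S, hexp, conj_K]
  -- `D` commutes with its exponential
  have hcomm : D * Matrix.diagonal lam = Matrix.diagonal lam * D := by
    have h := ((Commute.refl D).exp_right)
    rw [hexpD] at h
    exact h.eq
  -- hence `D` is diagonal
  have hDdiag : D = Matrix.diagonal (fun i => D i i) := by
    ext i j
    by_cases hij : i = j
    · subst hij; simp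
    · have h1 : D i j * lam j = lam i * D i j := by
        have h := congrFun (congrFun hcomm i) j
        simpa [Matrix.mul_diagonal, Matrix.diagonal_mul] using h
      have h2 : D i j * (lam j - lam i) = 0 := by linear_combination h1
      have h3 : lam j - lam i ≠ 0 := sub_ne_zero.mpr (hne j i (Ne.symm hij))
      rw [Matrix.diagonal_apply_ne _ hij]
      rcases mul_eq_zero.mp h2 with h | h
      · exact h
      · exact absurd h h3
  -- exponential of a diagonal matrix is diagonal of exponentials
  have hdiagexp : ∀ i : Fin 4, Real.exp (D i i) = lam i := by
    intro i
    have h4 : NormedSpace.exp (Matrix.diagonal (fun i => D i i)) = Matrix.diagonal lam := by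
      rw [← hDdiag]; exact hexpD
    rw [Matrix.exp_diagonal] at h4
    have h5 := congrFun (congrFun h4 i) i
    simpa [Matrix.diagonal_apply_eq, Pi.exp_def, ← Real.exp_eq_exp_ℝ] using h5
  have hpos : ∀ i : Fin 4, 0 < lam i := fun i => hdiagexp i ▸ Real.exp_pos _
  have hlog : ∀ i : Fin 4, D i i = Real.log (lam i) := by
    intro i; rw [← hdiagexp i, Real.log_exp]
  have hQ : Q = S * D * S⁻¹ := by
    rw [hD, show S * (S⁻¹ * Q * S) * S⁻¹ = S * S⁻¹ * Q * (S * S⁻¹) by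
      simp only [Matrix.mul_assoc], S_mul_S_inv, one_mul, mul_one]
  have hvec : (fun i => D i i) =
      ![Real.log (a + b + c + d), Real.log (a + b - c - d),
        Real.log (a - b + c - d), Real.log (a - b - c + d)] := by
    funext i
    fin_cases i <;> simp [hlog, hlam]
  have hQfinal : Q = S * Matrix.diagonal
      ![Real.log (a + b + c + d), Real.log (a + b - c - d),
        Real.log (a - b + c - d), Real.log (a - b - c + d)] * S⁻¹ := by
    rw [hQ, hDdiag, hvec]
  refine ⟨?_, ?_, ?_, ?_, ?_, hQfinal⟩
  · exact ⟨_, _, _, _, hQfinal.trans (S_diag_S_inv _)⟩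
  · simpa [hlam] using hpos 0
  · simpa [hlam] using hpos 1
  · simpa [hlam] using hpos 2
  · simpa [hlam] using hpos 3
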